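/- Let F be a compact metric space, L : F × F → [0,∞) continuous and symmetric, ρ a Borel probability measure on F, and z ∈ F. Suppose that for every τ ∈ (0,1), S((1−τ)ρ + τδ_z) + C(τ) ≥ S(ρ), where C(τ) := (τ²/(2h))·W_p(δ_z,ρ)² + ξτ·W_p(δ_z,ρ) for fixed h, ξ > 0 (i.e., ρ is stable under convex variation toward δ_z up to the penalization). Then ∫∫ L(x,y) dρ(x) dρ(y) ≤ ∫ L(x,z) dρ(x) + (ξ/2)·W_p(δ_z, ρ). -/

import Mathlib

open MeasureTheory Filter

/-- The `p`-Wasserstein distance, defined via couplings. -/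
noncomputable def wassersteinDist {F : Type*} [MetricSpace F] [MeasurableSpace F]
    (p : ℝ) (μ ν : Measure F) : ℝ :=
  (⨅ P : {P : Measure (F × F) // P.map Prod.fst = μ ∧ P.map Prod.snd = ν},
      ∫ q, dist q.1 q.2 ^ p ∂(P.1)) ^ (1 / p)

theorem approximate_euler_lagrange_of_stability {F : Type*} [MetricSpace F] [CompactSpace F]
    [MeasurableSpace F] [BorelSpace F]
    (L : F → F → ℝ) (hLnonneg : ∀ x y, 0 ≤ L x y) (hLsymm : ∀ x y, L x y = L y x)
    (hL : Continuous fun q : F × F => L q.1 q.2)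
    (p : ℝ) (hp : 1 ≤ p) (h ξ : ℝ) (hh : 0 < h) (hξ : 0 < ξ)
    (ρ : Measure F) [IsProbabilityMeasure ρ] (z : F)
    (hstable : ∀ τ : ℝ, 0 < τ → τ < 1 →
      (∫ x, ∫ y, L x y ∂ρ ∂ρ) ≤
        (∫ x, ∫ y, L x y
            ∂(ENNReal.ofReal (1 - τ) • ρ + ENNReal.ofReal τ • Measure.dirac z)
            ∂(ENNReal.ofReal (1 - τ) • ρ + ENNReal.ofReal τ • Measure.dirac z)) +
          (τ ^ 2 / (2 * h)) * wassersteinDist p (Measure.dirac z) ρ ^ 2 +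
          ξ * τ * wassersteinDist p (Measure.dirac z) ρ) :
    (∫ x, ∫ y, L x y ∂ρ ∂ρ) ≤
      (∫ x, L x z ∂ρ) + (ξ / 2) * wassersteinDist p (Measure.dirac z) ρ := by
  classical
  set S : ℝ := ∫ x, ∫ y, L x y ∂ρ ∂ρ with hSdef
  set A : ℝ := ∫ x, L x z ∂ρ with hAdef
  set W : ℝ := wassersteinDist p (Measure.dirac z) ρ with hWdef
  -- continuity facts
  have hLx : ∀ x : F, Continuous fun y => L x y := fun x =>
    hL.comp (continuous_const.prodMk continuous_id)
  have hLz : Continuous fun x => L x z :=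
    hL.comp (continuous_id.prodMk continuous_const)
  have hint : ∀ (μ : Measure F) [IsFiniteMeasure μ] (f : F → ℝ), Continuous f →
      Integrable f μ := fun μ _ f hf =>
    hf.integrable_of_hasCompactSupport (HasCompactSupport.of_compactSpace f)
  -- boundedness of L
  have : Nonempty F := ⟨z⟩
  obtain ⟨q0, -, hM⟩ := isCompact_univ.exists_isMaxOn
    (Set.univ_nonempty (α := F × F)) hL.continuousOn
  -- continuity of x ↦ ∫ y, L x y ∂ρ
  have hg : Continuous fun x => ∫ y, L x y ∂ρ := by
    refine continuous_of_dominated (fun x => (hint ρ _ (hLx x)).1)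
      (fun x => ae_of_all _ fun y => ?_) (integrable_const (L q0.1 q0.2))
      (ae_of_all _ fun y => hL.comp (continuous_id.prodMk continuous_const))
    rw [Real.norm_eq_abs, abs_of_nonneg (hLnonneg x y)]
    exact hM (Set.mem_univ (x, y))
  -- the expansion of the double integral against the mixture
  have key : ∀ τ : ℝ, 0 < τ → τ < 1 →
      2 * S - 2 * A - ξ * W ≤ τ * (S - 2 * A + L z z + W ^ 2 / (2 * h)) := by
    intro τ hτ0 hτ1
    have hτ0' : (0:ℝ) ≤ τ := hτ0.le
    have hτ1' : (0:ℝ) ≤ 1 - τ := by linarith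
    set μτ : Measure F :=
      ENNReal.ofReal (1 - τ) • ρ + ENNReal.ofReal τ • Measure.dirac z with hμτ
    have h1 : IsFiniteMeasure (ENNReal.ofReal (1 - τ) • ρ) :=
      ⟨by rw [Measure.smul_apply, smul_eq_mul]
          exact ENNReal.mul_lt_top ENNReal.ofReal_lt_top (measure_lt_top ρ _)⟩
    have h2 : IsFiniteMeasure (ENNReal.ofReal τ • Measure.dirac z) :=
      ⟨by rw [Measure.smul_apply, smul_eq_mul]
          exact ENNReal.mul_lt_top ENNReal.ofReal_lt_top (measure_lt_top (Measure.dirac z) _)⟩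
    have hμτfin : IsFiniteMeasure μτ := by rw [hμτ]; infer_instance
    -- inner integral
    have inner : ∀ x : F, (∫ y, L x y ∂μτ) = (1 - τ) * (∫ y, L x y ∂ρ) + τ * L x z := by
      intro x
      rw [hμτ, integral_add_measure ((hint ρ _ (hLx x)).smul_measure ENNReal.ofReal_ne_top)
          ((hint (Measure.dirac z) _ (hLx x)).smul_measure ENNReal.ofReal_ne_top),
        integral_smul_measure, integral_smul_measure, integral_dirac,
        ENNReal.toReal_ofReal hτ1', ENNReal.toReal_ofReal hτ0', smul_eq_mul, smul_eq_mul]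
    -- the integrand of the outer integral
    have hF : Continuous fun x => (1 - τ) * (∫ y, L x y ∂ρ) + τ * L x z :=
      (continuous_const.mul hg).add (continuous_const.mul hLz)
    have outer : (∫ x, ∫ y, L x y ∂μτ ∂μτ)
        = (1 - τ) * ((1 - τ) * S + τ * A) + τ * ((1 - τ) * A + τ * L z z) := by
      have e1 : (∫ x, ∫ y, L x y ∂μτ ∂μτ)
          = ∫ x, ((1 - τ) * (∫ y, L x y ∂ρ) + τ * L x z) ∂μτ :=
        integral_congr_ae (ae_of_all _ inner)
      rw [e1, hμτ,
        integral_add_measure ((hint ρ _ hF).smul_measure ENNReal.ofReal_ne_top)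
          ((hint (Measure.dirac z) _ hF).smul_measure ENNReal.ofReal_ne_top),
        integral_smul_measure, integral_smul_measure, integral_dirac,
        ENNReal.toReal_ofReal hτ1', ENNReal.toReal_ofReal hτ0', smul_eq_mul, smul_eq_mul,
        integral_add ((hint ρ _ hg).const_mul _) ((hint ρ _ hLz).const_mul _),
        integral_const_mul, integral_const_mul]
      have hAz : (∫ y, L z y ∂ρ) = A := by
        rw [hAdef]; exact integral_congr_ae (ae_of_all _ fun y => hLsymm z y)
      rw [hAz, ← hSdef, ← hAdef]
    have := hstable τ hτ0 hτ1
    rw [outer] at this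
    have h2 : τ * (2 * S - 2 * A - ξ * W)
        ≤ τ * (τ * (S - 2 * A + L z z + W ^ 2 / (2 * h))) := by
      have heq : (1 - τ) * ((1 - τ) * S + τ * A) + τ * ((1 - τ) * A + τ * L z z) +
          τ ^ 2 / (2 * h) * W ^ 2 + ξ * τ * W
          = S + (τ * (τ * (S - 2 * A + L z z + W ^ 2 / (2 * h)))
            - τ * (2 * S - 2 * A - ξ * W)) := by
        field_simp
        ring
      linarith [this, heq]
    exact le_of_mul_le_mul_left h2 hτ0
  -- take the limit τ → 0⁺
  have hC : Tendsto (fun τ : ℝ => τ * (S - 2 * A + L z z + W ^ 2 / (2 * h)))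
      (nhdsWithin 0 (Set.Ioi 0)) (nhds 0) := by
    have := (continuous_id.mul (continuous_const
        (y := S - 2 * A + L z z + W ^ 2 / (2 * h)))).tendsto 0
    simp only [Pi.mul_def, id, zero_mul] at this
    exact this.mono_left nhdsWithin_le_nhds
  have hev : ∀ᶠ τ in nhdsWithin (0:ℝ) (Set.Ioi 0),
      2 * S - 2 * A - ξ * W ≤ τ * (S - 2 * A + L z z + W ^ 2 / (2 * h)) := by
    have h1 : ∀ᶠ τ in nhdsWithin (0:ℝ) (Set.Ioi 0), τ < 1 :=
      eventually_nhdsWithin_of_eventually_nhds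
        (tendsto_id.eventually_lt_const (by norm_num))
    filter_upwards [self_mem_nhdsWithin, h1] with τ hτ0 hτ1
    exact key τ hτ0 hτ1
  have hfinal : 2 * S - 2 * A - ξ * W ≤ 0 := ge_of_tendsto hC hev
  linarith
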